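/- Entropy with logarithmic correction, case κ₂ > κ₁ (inequality (3.16)). Let ψ ∈ Ψ(a,b), let 0 < κ₁ < a, κ₂ > κ₁ and C₀ ≥ 1, let T be a finite nonempty set and Y(t) : X → ℝ measurable for each t ∈ T with sup_{t∈T} ‖Y(t)‖_{G(ψ)} ≤ 1. Write d_ψ(t,s) = ‖Y(t) − Y(s)‖_{G(ψ)} and assume that for every ε ∈ (0,1] there exists an ε-net of (T, d_ψ) of cardinality at most C₀ ε^{−κ₁} (1 + |log ε|)^{−κ₂}. Then there is a constant C depending only on C₀, κ₁, κ₂ and a such that ‖max_{t∈T} Y(t)‖_{G(ψ)} ≤ C. -/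

import Mathlib

open MeasureTheory ENNReal Set

noncomputable section

/-- The set of exponents p with a < p and p < b (b may be infinite). -/
def expSet (a : ℝ) (b : ℝ≥0∞) : Set ℝ := {p : ℝ | a < p ∧ ENNReal.ofReal p < b}

/-- The class Ψ(a,b). -/
structure IsPsi (a : ℝ) (b : ℝ≥0∞) (ψ : ℝ → ℝ) : Prop where
  one_le : ∀ p ∈ expSet a b, 1 ≤ ψ p
  bddOnCompacts : ∀ c d : ℝ, c ∈ expSet a b → d ∈ expSet a b → BddAbove (ψ '' Set.Icc c d)
  logConvex : ConvexOn ℝ (expSet a b) fun p => Real.log (ψ p)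

/-- L^p norm (real exponent). -/
def lpNorm {X : Type*} [MeasurableSpace X] (μ : Measure X) (f : X → ℝ) (p : ℝ) : ℝ≥0∞ :=
  (∫⁻ x, ENNReal.ofReal (|f x| ^ p) ∂μ) ^ (1 / p)

/-- Bilateral Grand Lebesgue norm. -/
def glNorm {X : Type*} [MeasurableSpace X] (μ : Measure X) (a : ℝ) (b : ℝ≥0∞) (ψ : ℝ → ℝ)
    (f : X → ℝ) : ℝ≥0∞ :=
  ⨆ p ∈ expSet a b, lpNorm μ f p / ENNReal.ofReal (ψ p)

/-- L^p norm for extended-real-valued functions. -/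
def lpNormE {X : Type*} [MeasurableSpace X] (μ : Measure X) (g : X → EReal) (p : ℝ) : ℝ≥0∞ :=
  (∫⁻ x, (g x).abs ^ p ∂μ) ^ (1 / p)

/-- Bilateral Grand Lebesgue norm for extended-real-valued functions. -/
def glNormE {X : Type*} [MeasurableSpace X] (μ : Measure X) (a : ℝ) (b : ℝ≥0∞) (ψ : ℝ → ℝ)
    (g : X → EReal) : ℝ≥0∞ :=
  ⨆ p ∈ expSet a b, lpNormE μ g p / ENNReal.ofReal (ψ p)

/-- L^p norm for `ℝ≥0∞`-valued functions. -/
def lpNormNN {X : Type*} [MeasurableSpace X] (μ : Measure X) (g : X → ℝ≥0∞) (p : ℝ) : ℝ≥0∞ :=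
  (∫⁻ x, g x ^ p ∂μ) ^ (1 / p)

end

section helpers
variable {X : Type*} [MeasurableSpace X] (μ : Measure X)

lemma lpNorm_eq_lpNormNN (f : X → ℝ) (p : ℝ) (hp : 0 ≤ p) :
    lpNorm μ f p = lpNormNN μ (fun x => ENNReal.ofReal |f x|) p := by
  unfold _root_.lpNorm lpNormNN
  congr 1
  refine lintegral_congr fun x => ?_
  rw [ENNReal.ofReal_rpow_of_nonneg (abs_nonneg _) hp]

lemma lpNormNN_mono {f g : X → ℝ≥0∞} (p : ℝ) (hp : 0 ≤ p) (h : ∀ x, f x ≤ g x) :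
    lpNormNN μ f p ≤ lpNormNN μ g p := by
  unfold lpNormNN
  have h1p : (0:ℝ) ≤ 1 / p := by positivity
  exact ENNReal.rpow_le_rpow (lintegral_mono fun x => ENNReal.rpow_le_rpow (h x) hp) h1p

lemma lpNormNN_add_le {f g : X → ℝ≥0∞} (hf : Measurable f) (hg : Measurable g) {p : ℝ}
    (hp : 1 ≤ p) :
    lpNormNN μ (fun x => f x + g x) p ≤ lpNormNN μ f p + lpNormNN μ g p :=
  ENNReal.lintegral_Lp_add_le hf.aemeasurable hg.aemeasurable hp

lemma lpNormNN_sum_le {ι : Type*} [DecidableEq ι] (s : Finset ι) (f : ι → X → ℝ≥0∞)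
    (hf : ∀ i, Measurable (f i)) {p : ℝ} (hp : 1 ≤ p) :
    lpNormNN μ (fun x => ∑ i ∈ s, f i x) p ≤ ∑ i ∈ s, lpNormNN μ (f i) p := by
  induction s using Finset.induction with
  | empty =>
      simp only [Finset.sum_empty]
      unfold lpNormNN
      simp only [ENNReal.zero_rpow_of_pos (lt_of_lt_of_le one_pos hp), lintegral_zero,
        ENNReal.zero_rpow_of_pos (by positivity : (0:ℝ) < 1/p), Finset.sum_empty, le_refl]
  | @insert i t hi ih =>
      simp only [Finset.sum_insert hi]
      calc lpNormNN μ (fun x => f i x + ∑ j ∈ t, f j x) p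
          ≤ lpNormNN μ (f i) p + lpNormNN μ (fun x => ∑ j ∈ t, f j x) p :=
            lpNormNN_add_le μ (hf i) (by exact Finset.measurable_sum t fun j _ => hf j) hp
        _ ≤ lpNormNN μ (f i) p + ∑ j ∈ t, lpNormNN μ (f j) p := by gcongr

lemma lpNormNN_finset_sup_le {ι : Type*} (s : Finset ι) (f : ι → X → ℝ≥0∞)
    (hf : ∀ i, Measurable (f i)) {p : ℝ} (hp : 1 ≤ p) (B : ℝ≥0∞)
    (hB : ∀ i ∈ s, lpNormNN μ (f i) p ≤ B) :
    lpNormNN μ (fun x => s.sup fun i => f i x) p ≤ (s.card : ℝ≥0∞) ^ (1/p) * B := by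
  have hp0 : (0:ℝ) < p := lt_of_lt_of_le one_pos hp
  have step1 : ∀ x, (s.sup fun i => f i x) ^ p ≤ ∑ i ∈ s, f i x ^ p := by
    intro x
    rcases s.eq_empty_or_nonempty with h | h
    · simp [h, ENNReal.zero_rpow_of_pos hp0]
    · obtain ⟨i, hi, hie⟩ := Finset.exists_mem_eq_sup s h fun i => f i x
      rw [hie]
      exact Finset.single_le_sum (f := fun j => f j x ^ p) (fun j _ => zero_le) hi
  have step2 : (∫⁻ x, (s.sup fun i => f i x) ^ p ∂μ) ≤ ∑ i ∈ s, ∫⁻ x, f i x ^ p ∂μ := by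
    calc _ ≤ ∫⁻ x, ∑ i ∈ s, f i x ^ p ∂μ := lintegral_mono step1
      _ = _ := lintegral_finset_sum s fun i _ => (hf i).pow_const p
  have step3 : ∑ i ∈ s, ∫⁻ x, f i x ^ p ∂μ ≤ (s.card : ℝ≥0∞) * B ^ p := by
    calc ∑ i ∈ s, ∫⁻ x, f i x ^ p ∂μ ≤ ∑ _i ∈ s, B ^ p := by
          refine Finset.sum_le_sum fun i hi => ?_
          have h1 : ((∫⁻ x, f i x ^ p ∂μ) ^ (1/p)) ^ p ≤ B ^ p :=
            ENNReal.rpow_le_rpow (hB i hi) (le_of_lt hp0)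
          rwa [← ENNReal.rpow_mul, one_div, inv_mul_cancel₀ (ne_of_gt hp0),
            ENNReal.rpow_one] at h1
      _ = (s.card : ℝ≥0∞) * B ^ p := by rw [Finset.sum_const, nsmul_eq_mul]
  unfold lpNormNN
  calc (∫⁻ x, (s.sup fun i => f i x) ^ p ∂μ) ^ (1/p)
      ≤ ((s.card : ℝ≥0∞) * B ^ p) ^ (1/p) :=
        ENNReal.rpow_le_rpow (step2.trans step3) (by positivity)
    _ = (s.card : ℝ≥0∞) ^ (1/p) * B := by
        rw [ENNReal.mul_rpow_of_nonneg _ _ (by positivity), ← ENNReal.rpow_mul,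
          mul_one_div_cancel (ne_of_gt hp0), ENNReal.rpow_one]

lemma lpNormNN_iSup_comp_le {ι κ : Type*} [Fintype ι] [Nonempty ι] [DecidableEq κ]
    (v : ι → κ) (h : κ → X → ℝ≥0∞) (hmeas : ∀ s, Measurable (h s)) {p : ℝ} (hp : 1 ≤ p)
    (B : ℝ≥0∞) (hB : ∀ s, lpNormNN μ (h s) p ≤ B) :
    lpNormNN μ (fun x => ⨆ t, h (v t) x) p
      ≤ ((Finset.univ.image v).card : ℝ≥0∞) ^ (1/p) * B := by
  have heq : ∀ x, (⨆ t, h (v t) x) = (Finset.univ.image v).sup fun s => h s x := by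
    intro x
    rw [Finset.sup_image, Finset.sup_eq_iSup]
    simp [Function.comp]
  calc lpNormNN μ (fun x => ⨆ t, h (v t) x) p
      = lpNormNN μ (fun x => (Finset.univ.image v).sup fun s => h s x) p := by
        unfold lpNormNN; congr 1; exact lintegral_congr fun x => by simp only []; rw [heq x]
    _ ≤ _ := lpNormNN_finset_sup_le μ _ _ (fun s => hmeas s) hp B (fun s _ => hB s)

end helpers

/-- Entropy with logarithmic correction, case κ₂ > κ₁ (inequality (3.16)). -/
theorem log_entropy_BGL_gt (a κ₁ κ₂ C₀ : ℝ) (ha : 1 ≤ a)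
    (hκ₁ : 0 < κ₁) (hκ₁a : κ₁ < a) (hκ₁₂ : κ₁ < κ₂) (hC₀ : 1 ≤ C₀) :
    ∃ C : ℝ, 0 < C ∧
      ∀ (X : Type*) [MeasurableSpace X], ∀ (μ : Measure X) [SigmaFinite μ],
      ∀ (b : ℝ≥0∞), ENNReal.ofReal a < b →
      ∀ (ψ : ℝ → ℝ), IsPsi a b ψ →
      ∀ (T : Type*) [Fintype T] [Nonempty T],
      ∀ (Y : T → X → ℝ), (∀ t, Measurable (Y t)) →
      (∀ t : T, glNorm μ a b ψ (Y t) ≤ 1) →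
      (∀ ε : ℝ, 0 < ε → ε ≤ 1 → ∃ F : Finset T,
        ((F.card : ℝ) ≤ C₀ * ε ^ (-κ₁) * (1 + |Real.log ε|) ^ (-κ₂)) ∧
          ∀ t : T, ∃ s ∈ F, glNorm μ a b ψ (fun x => Y t x - Y s x) ≤ ENNReal.ofReal ε) →
      glNorm μ a b ψ (fun x => ⨆ t, Y t x) ≤ ENNReal.ofReal C := by
  classical
  have ha0 : (0:ℝ) < a := lt_of_lt_of_le one_pos ha
  set θ : ℝ := κ₁ / a with hθdef
  have hθ0 : 0 < θ := div_pos hκ₁ ha0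
  have hθ1 : θ < 1 := (div_lt_one ha0).2 hκ₁a
  set r : ℝ := (2:ℝ) ^ (θ - 1) with hrdef
  have hr0 : 0 < r := Real.rpow_pos_of_pos two_pos _
  have hr1 : r < 1 := Real.rpow_lt_one_of_one_lt_of_neg one_lt_two (by linarith)
  have h1r : 0 < 1 - r := by linarith
  refine ⟨3 * C₀ / (1 - r), by positivity, ?_⟩
  intro X _ μ _ b hb ψ hψ T _ _ Y hY hYnorm hnet
  -- nets at scales 2^{-n}
  have key : ∀ n : ℕ, ∃ F : Finset T, ((F.card : ℝ) ≤ C₀ * 2 ^ ((n:ℝ) * κ₁)) ∧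
      ∀ t, ∃ s ∈ F, glNorm μ a b ψ (fun x => Y t x - Y s x)
        ≤ ENNReal.ofReal ((2:ℝ) ^ (-(n:ℝ))) := by
    intro n
    have hε0 : (0:ℝ) < 2 ^ (-(n:ℝ)) := Real.rpow_pos_of_pos two_pos _
    have hε1 : (2:ℝ) ^ (-(n:ℝ)) ≤ 1 :=
      Real.rpow_le_one_of_one_le_of_nonpos one_le_two (neg_nonpos.mpr (Nat.cast_nonneg n))
    obtain ⟨F, hcard, hFnet⟩ := hnet _ hε0 hε1
    refine ⟨F, ?_, hFnet⟩
    have h3 : (1 + |Real.log ((2:ℝ) ^ (-(n:ℝ)))|) ^ (-κ₂) ≤ 1 :=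
      Real.rpow_le_one_of_one_le_of_nonpos
        (by linarith [abs_nonneg (Real.log ((2:ℝ) ^ (-(n:ℝ))))]) (by linarith)
    calc ((F.card:ℝ))
        ≤ C₀ * ((2:ℝ)^(-(n:ℝ)))^(-κ₁) * (1 + |Real.log ((2:ℝ)^(-(n:ℝ)))|)^(-κ₂) := hcard
      _ ≤ C₀ * ((2:ℝ)^(-(n:ℝ)))^(-κ₁) * 1 := by
          refine mul_le_mul_of_nonneg_left h3 ?_
          positivity
      _ = C₀ * 2 ^ ((n:ℝ)*κ₁) := by
          rw [mul_one, ← Real.rpow_mul (by norm_num : (0:ℝ) ≤ 2), neg_mul_neg]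
  choose F hFcard hFnet using key
  choose q hqmem hqle using hFnet
  refine iSup_le fun p => iSup_le fun hp => ?_
  obtain ⟨hap, hpb⟩ := hp
  have hp1 : (1:ℝ) ≤ p := le_trans ha (le_of_lt hap)
  have hp0 : (0:ℝ) < p := lt_of_lt_of_le one_pos hp1
  have hψ1 : (1:ℝ) ≤ ψ p := hψ.one_le p ⟨hap, hpb⟩
  have hΨ0 : ENNReal.ofReal (ψ p) ≠ 0 := by
    simp only [ne_eq, ENNReal.ofReal_eq_zero, not_le]; linarith
  have hΨt : ENNReal.ofReal (ψ p) ≠ ⊤ := ENNReal.ofReal_ne_top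
  rw [ENNReal.div_le_iff hΨ0 hΨt]
  have hlp : ∀ (f : X → ℝ) (c : ℝ≥0∞), glNorm μ a b ψ f ≤ c →
      lpNorm μ f p ≤ c * ENNReal.ofReal (ψ p) := by
    intro f c hc
    have h1 : lpNorm μ f p / ENNReal.ofReal (ψ p) ≤ c :=
      le_trans (le_iSup₂ (f := fun p (_ : p ∈ expSet a b) =>
        lpNorm μ f p / ENNReal.ofReal (ψ p)) p ⟨hap, hpb⟩) hc
    rwa [ENNReal.div_le_iff hΨ0 hΨt] at h1
  have hYt : ∀ t, lpNorm μ (Y t) p ≤ ENNReal.ofReal (ψ p) := fun t => by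
    simpa using hlp (Y t) 1 (hYnorm t)
  have hQ : ∀ n t, lpNorm μ (fun x => Y t x - Y (q n t) x) p ≤
      ENNReal.ofReal ((2:ℝ)^(-(n:ℝ))) * ENNReal.ofReal (ψ p) := fun n t => hlp _ _ (hqle n t)
  have hQ' : ∀ n s, lpNormNN μ (fun x => ENNReal.ofReal |Y s x - Y (q n s) x|) p ≤
      ENNReal.ofReal ((2:ℝ)^(-(n:ℝ))) * ENNReal.ofReal (ψ p) := by
    intro n s
    rw [← lpNorm_eq_lpNormNN μ _ p hp0.le]
    exact hQ n s
  have hYt' : ∀ s, lpNormNN μ (fun x => ENNReal.ofReal |Y s x|) p ≤ ENNReal.ofReal (ψ p) := by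
    intro s
    rw [← lpNorm_eq_lpNormNN μ _ p hp0.le]
    exact hYt s
  -- cardinality bounds in ℝ≥0∞, raised to power 1/p
  have hcard_pow : ∀ (s : Finset T) (n : ℕ), s ⊆ F n →
      ((s.card : ℝ≥0∞)) ^ (1/p) ≤ ENNReal.ofReal (C₀ * 2 ^ ((n:ℝ) * θ)) := by
    intro s n hs
    have h1 : ((s.card : ℝ≥0∞)) ≤ ENNReal.ofReal (C₀ * 2 ^ ((n:ℝ) * κ₁)) := by
      rw [← ENNReal.ofReal_natCast]
      refine ENNReal.ofReal_le_ofReal ?_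
      exact le_trans (Nat.cast_le.mpr (Finset.card_le_card hs)) (hFcard n)
    have h1p0 : (0:ℝ) ≤ 1/p := by positivity
    have h1p1 : (1:ℝ)/p ≤ 1 := by
      rw [div_le_one hp0]; exact hp1
    calc ((s.card : ℝ≥0∞)) ^ (1/p)
        ≤ (ENNReal.ofReal (C₀ * 2 ^ ((n:ℝ) * κ₁))) ^ (1/p) :=
          ENNReal.rpow_le_rpow h1 h1p0
      _ = ENNReal.ofReal ((C₀ * 2 ^ ((n:ℝ) * κ₁)) ^ (1/p)) :=
          ENNReal.ofReal_rpow_of_nonneg (by positivity) h1p0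
      _ ≤ ENNReal.ofReal (C₀ * 2 ^ ((n:ℝ) * θ)) := by
          refine ENNReal.ofReal_le_ofReal ?_
          rw [Real.mul_rpow (by linarith) (by positivity)]
          have e1 : C₀ ^ ((1:ℝ)/p) ≤ C₀ := by
            nth_rewrite 2 [← Real.rpow_one C₀]
            exact Real.rpow_le_rpow_of_exponent_le hC₀ h1p1
          have e2 : ((2:ℝ) ^ ((n:ℝ) * κ₁)) ^ ((1:ℝ)/p) ≤ 2 ^ ((n:ℝ) * θ) := by
            rw [← Real.rpow_mul (by norm_num : (0:ℝ) ≤ 2)]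
            refine Real.rpow_le_rpow_of_exponent_le one_le_two ?_
            rw [mul_one_div]
            have : κ₁ / p ≤ κ₁ / a := by
              apply div_le_div_of_nonneg_left hκ₁.le ha0 (le_of_lt hap)
            calc (n:ℝ) * κ₁ / p = (n:ℝ) * (κ₁ / p) := by ring
              _ ≤ (n:ℝ) * (κ₁ / a) := by
                  exact mul_le_mul_of_nonneg_left this (Nat.cast_nonneg n)
              _ = (n:ℝ) * θ := rfl
          exact mul_le_mul e1 e2 (by positivity) (by linarith)
  -- main estimate for each truncation level N
  have main : ∀ N : ℕ, lpNorm μ (fun x => ⨆ t, Y t x) p ≤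
      ENNReal.ofReal (3 * C₀ / (1 - r)) * ENNReal.ofReal (ψ p) +
      (Fintype.card T : ℝ≥0∞) * (ENNReal.ofReal ((2:ℝ)^(-(N:ℝ))) * ENNReal.ofReal (ψ p)) := by
    intro N
    set u : ℕ → T → T := fun j => Nat.rec (q N) (fun j prev t => q (N - (j+1)) (prev t)) j
      with hu
    have husucc : ∀ j t, u (j+1) t = q (N - (j+1)) (u j t) := fun j t => rfl
    have humem : ∀ j t, u j t ∈ F (N - j) := by
      intro j t
      cases j with
      | zero => exact hqmem N t
      | succ j => exact hqmem _ _
    set A : X → ℝ≥0∞ := fun x => ⨆ t, ENNReal.ofReal |Y t x - Y (u 0 t) x| with hA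
    set Bf : ℕ → X → ℝ≥0∞ :=
      fun j x => ⨆ t, ENNReal.ofReal |Y (u j t) x - Y (u (j+1) t) x| with hBf
    set Hd : X → ℝ≥0∞ := fun x => ⨆ t, ENNReal.ofReal |Y (u N t) x| with hHd
    have hAmeas : Measurable A :=
      Measurable.iSup fun t => (((hY t).sub (hY (u 0 t))).abs).ennreal_ofReal
    have hBmeas : ∀ j, Measurable (Bf j) := fun j =>
      Measurable.iSup fun t => (((hY (u j t)).sub (hY (u (j+1) t))).abs).ennreal_ofReal
    have hHmeas : Measurable Hd :=
      Measurable.iSup fun t => ((hY (u N t)).abs).ennreal_ofReal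
    have hpt : ∀ x, ENNReal.ofReal |⨆ t, Y t x| ≤
        A x + (∑ j ∈ Finset.range N, Bf j x) + Hd x := by
      intro x
      obtain ⟨t₁, ht₁⟩ := Finite.exists_max fun t => Y t x
      have hsup : (⨆ t, Y t x) = Y t₁ x :=
        le_antisymm (ciSup_le ht₁) (le_ciSup (f := fun t => Y t x) (Finite.bddAbove_range _) t₁)
      rw [hsup]
      have tele : Y t₁ x = (Y t₁ x - Y (u 0 t₁) x) +
          (∑ j ∈ Finset.range N, (Y (u j t₁) x - Y (u (j+1) t₁) x)) + Y (u N t₁) x := by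
        rw [Finset.sum_range_sub' (fun j => Y (u j t₁) x) N]; ring
      calc ENNReal.ofReal |Y t₁ x|
          ≤ ENNReal.ofReal (|Y t₁ x - Y (u 0 t₁) x| +
            (∑ j ∈ Finset.range N, |Y (u j t₁) x - Y (u (j+1) t₁) x|) + |Y (u N t₁) x|) := by
            refine ENNReal.ofReal_le_ofReal ?_
            conv_lhs => rw [tele]
            refine le_trans (abs_add_le _ _) ?_
            gcongr
            refine le_trans (abs_add_le _ _) ?_
            gcongr
            exact Finset.abs_sum_le_sum_abs _ _
        _ ≤ A x + (∑ j ∈ Finset.range N, Bf j x) + Hd x := by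
            rw [ENNReal.ofReal_add (by positivity) (abs_nonneg _),
              ENNReal.ofReal_add (abs_nonneg _) (by positivity),
              ENNReal.ofReal_sum_of_nonneg (fun j _ => abs_nonneg _)]
            gcongr
            · exact le_iSup (fun t => ENNReal.ofReal |Y t x - Y (u 0 t) x|) t₁
            · rename_i j hj
              exact le_iSup_of_le t₁ le_rfl
            · exact le_iSup (fun t => ENNReal.ofReal |Y (u N t) x|) t₁
    have hstep : lpNorm μ (fun x => ⨆ t, Y t x) p ≤
        lpNormNN μ A p + (∑ j ∈ Finset.range N, lpNormNN μ (Bf j) p) + lpNormNN μ Hd p := by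
      rw [lpNorm_eq_lpNormNN μ _ p hp0.le]
      have hsum_meas : Measurable (fun x => ∑ j ∈ Finset.range N, Bf j x) :=
        Finset.measurable_sum _ fun j _ => hBmeas j
      calc lpNormNN μ (fun x => ENNReal.ofReal |⨆ t, Y t x|) p
          ≤ lpNormNN μ (fun x => (A x + ∑ j ∈ Finset.range N, Bf j x) + Hd x) p :=
            lpNormNN_mono μ p hp0.le hpt
        _ ≤ lpNormNN μ (fun x => A x + ∑ j ∈ Finset.range N, Bf j x) p + lpNormNN μ Hd p :=
            lpNormNN_add_le μ (hAmeas.add hsum_meas) hHmeas hp1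
        _ ≤ (lpNormNN μ A p + lpNormNN μ (fun x => ∑ j ∈ Finset.range N, Bf j x) p) +
              lpNormNN μ Hd p := by
            gcongr
            exact lpNormNN_add_le μ hAmeas hsum_meas hp1
        _ ≤ _ := by
            gcongr
            exact lpNormNN_sum_le μ _ _ hBmeas hp1
    -- bound the tail term A
    have hAle : lpNormNN μ A p ≤ (Fintype.card T : ℝ≥0∞) *
        (ENNReal.ofReal ((2:ℝ)^(-(N:ℝ))) * ENNReal.ofReal (ψ p)) := by
      have h1 := lpNormNN_iSup_comp_le μ (id : T → T)
        (fun s x => ENNReal.ofReal |Y s x - Y (q N s) x|)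
        (fun s => (((hY s).sub (hY (q N s))).abs).ennreal_ofReal) hp1
        (ENNReal.ofReal ((2:ℝ)^(-(N:ℝ))) * ENNReal.ofReal (ψ p)) (fun s => hQ' N s)
      rw [Finset.image_id] at h1
      have hcard1 : (1:ℝ≥0∞) ≤ ((Finset.univ : Finset T).card : ℝ≥0∞) := by
        rw [Finset.card_univ]
        exact_mod_cast Fintype.card_pos
      calc lpNormNN μ A p
          ≤ ((Finset.univ : Finset T).card : ℝ≥0∞) ^ (1/p) *
            (ENNReal.ofReal ((2:ℝ)^(-(N:ℝ))) * ENNReal.ofReal (ψ p)) := h1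
        _ ≤ (Fintype.card T : ℝ≥0∞) *
            (ENNReal.ofReal ((2:ℝ)^(-(N:ℝ))) * ENNReal.ofReal (ψ p)) := by
            gcongr
            rw [← Finset.card_univ]
            calc ((Finset.univ : Finset T).card : ℝ≥0∞) ^ (1/p)
                ≤ ((Finset.univ : Finset T).card : ℝ≥0∞) ^ (1:ℝ) :=
                  ENNReal.rpow_le_rpow_of_exponent_le hcard1
                    (by rw [div_le_one hp0]; exact hp1)
              _ = _ := ENNReal.rpow_one _
    -- bound the head term
    have hHle : lpNormNN μ Hd p ≤ ENNReal.ofReal C₀ * ENNReal.ofReal (ψ p) := by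
      have h1 := lpNormNN_iSup_comp_le μ (u N) (fun s x => ENNReal.ofReal |Y s x|)
        (fun s => ((hY s).abs).ennreal_ofReal) hp1 (ENNReal.ofReal (ψ p)) hYt'
      refine le_trans h1 ?_
      gcongr
      have hsub : Finset.univ.image (u N) ⊆ F 0 := by
        intro s hs
        obtain ⟨t, -, rfl⟩ := Finset.mem_image.mp hs
        have := humem N t
        rwa [Nat.sub_self] at this
      calc ((Finset.univ.image (u N)).card : ℝ≥0∞) ^ (1/p)
          ≤ ENNReal.ofReal (C₀ * 2 ^ (((0:ℕ):ℝ) * θ)) := hcard_pow _ 0 hsub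
        _ = ENNReal.ofReal C₀ := by norm_num
    -- bound the chaining terms
    have hBle : ∀ j ∈ Finset.range N, lpNormNN μ (Bf j) p ≤
        ENNReal.ofReal (2 * C₀ * r ^ (N - j)) * ENNReal.ofReal (ψ p) := by
      intro j hj
      have hjN : j < N := Finset.mem_range.mp hj
      set m : ℕ := N - j with hm
      have hm1 : 1 ≤ m := Nat.le_sub_of_add_le (by omega)
      have hidx : N - (j+1) = m - 1 := by omega
      have h1 := lpNormNN_iSup_comp_le μ (u j)
        (fun s x => ENNReal.ofReal |Y s x - Y (q (N - (j+1)) s) x|)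
        (fun s => (((hY s).sub (hY (q (N - (j+1)) s))).abs).ennreal_ofReal) hp1
        (ENNReal.ofReal ((2:ℝ)^(-((N - (j+1) : ℕ):ℝ))) * ENNReal.ofReal (ψ p))
        (fun s => hQ' (N - (j+1)) s)
      have hBeq : lpNormNN μ (Bf j) p = lpNormNN μ
          (fun x => ⨆ t, ENNReal.ofReal |Y (u j t) x - Y (q (N - (j+1)) (u j t)) x|) p := rfl
      rw [hBeq]
      refine le_trans h1 ?_
      have hsub : Finset.univ.image (u j) ⊆ F (N - j) := by
        intro s hs
        obtain ⟨t, -, rfl⟩ := Finset.mem_image.mp hs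
        exact humem j t
      have hc := hcard_pow _ (N - j) hsub
      calc ((Finset.univ.image (u j)).card : ℝ≥0∞) ^ (1/p) *
            (ENNReal.ofReal ((2:ℝ)^(-((N - (j+1) : ℕ):ℝ))) * ENNReal.ofReal (ψ p))
          ≤ ENNReal.ofReal (C₀ * 2 ^ ((m:ℝ) * θ)) *
            (ENNReal.ofReal ((2:ℝ)^(-((N - (j+1) : ℕ):ℝ))) * ENNReal.ofReal (ψ p)) := by
            gcongr
        _ = ENNReal.ofReal (C₀ * 2 ^ ((m:ℝ) * θ) * (2:ℝ)^(-((N - (j+1) : ℕ):ℝ))) *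
              ENNReal.ofReal (ψ p) := by
            rw [← mul_assoc, ← ENNReal.ofReal_mul (by positivity)]
        _ ≤ ENNReal.ofReal (2 * C₀ * r ^ (N - j)) * ENNReal.ofReal (ψ p) := by
            refine mul_le_mul_left (ENNReal.ofReal_le_ofReal ?_) _
            have hcast : ((N - (j+1) : ℕ):ℝ) = (m:ℝ) - 1 := by
              rw [hidx, Nat.cast_sub hm1, Nat.cast_one]
            rw [hcast]
            have hexp : (2:ℝ) ^ ((m:ℝ) * θ) * (2:ℝ) ^ (-((m:ℝ) - 1)) =
                2 * ((2:ℝ) ^ (θ - 1)) ^ (m:ℕ) := by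
              rw [← Real.rpow_add two_pos]
              have : (m:ℝ) * θ + -((m:ℝ) - 1) = (θ - 1) * (m:ℝ) + 1 := by ring
              rw [this, Real.rpow_add two_pos, Real.rpow_one,
                Real.rpow_mul (by norm_num : (0:ℝ) ≤ 2), Real.rpow_natCast]
              ring
            refine le_of_eq ?_
            rw [mul_assoc, hexp, ← hrdef, hm]
            ring
    -- geometric sum
    have hgeom : ∑ j ∈ Finset.range N, (2 * C₀ * r ^ (N - j)) ≤ 2 * C₀ / (1 - r) := by
      have h1 : ∀ j ∈ Finset.range N, 2 * C₀ * r ^ (N - j) ≤ 2 * C₀ * r ^ (N - 1 - j) := by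
        intro j hj
        have hle : N - 1 - j ≤ N - j := by omega
        have h2 := pow_le_pow_of_le_one hr0.le hr1.le hle
        nlinarith [h2]
      calc ∑ j ∈ Finset.range N, 2 * C₀ * r ^ (N - j)
          ≤ ∑ j ∈ Finset.range N, 2 * C₀ * r ^ (N - 1 - j) := Finset.sum_le_sum h1
        _ = ∑ j ∈ Finset.range N, 2 * C₀ * r ^ j :=
            Finset.sum_range_reflect (fun j => 2 * C₀ * r ^ j) N
        _ = 2 * C₀ * ∑ j ∈ Finset.range N, r ^ j := by rw [Finset.mul_sum]
        _ ≤ 2 * C₀ * (1 - r)⁻¹ := by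
            have h3 := Summable.sum_le_tsum (Finset.range N) (fun i _ => by positivity)
              (summable_geometric_of_lt_one hr0.le hr1)
            rw [tsum_geometric_of_lt_one hr0.le hr1] at h3
            nlinarith [h3]
        _ = 2 * C₀ / (1 - r) := by rw [div_eq_mul_inv]
    have hBsum : ∑ j ∈ Finset.range N, lpNormNN μ (Bf j) p ≤
        ENNReal.ofReal (2 * C₀ / (1 - r)) * ENNReal.ofReal (ψ p) := by
      calc ∑ j ∈ Finset.range N, lpNormNN μ (Bf j) p
          ≤ ∑ j ∈ Finset.range N,
              ENNReal.ofReal (2 * C₀ * r ^ (N - j)) * ENNReal.ofReal (ψ p) :=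
            Finset.sum_le_sum hBle
        _ = ENNReal.ofReal (∑ j ∈ Finset.range N, 2 * C₀ * r ^ (N - j)) *
              ENNReal.ofReal (ψ p) := by
            rw [ENNReal.ofReal_sum_of_nonneg (fun j _ => by positivity), Finset.sum_mul]
        _ ≤ _ := mul_le_mul_left (ENNReal.ofReal_le_ofReal hgeom) _
    refine le_trans hstep ?_
    calc lpNormNN μ A p + (∑ j ∈ Finset.range N, lpNormNN μ (Bf j) p) + lpNormNN μ Hd p
        ≤ (Fintype.card T : ℝ≥0∞) *
            (ENNReal.ofReal ((2:ℝ)^(-(N:ℝ))) * ENNReal.ofReal (ψ p)) +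
          ENNReal.ofReal (2 * C₀ / (1 - r)) * ENNReal.ofReal (ψ p) +
          ENNReal.ofReal C₀ * ENNReal.ofReal (ψ p) :=
          add_le_add (add_le_add hAle hBsum) hHle
      _ ≤ ENNReal.ofReal (3 * C₀ / (1 - r)) * ENNReal.ofReal (ψ p) +
          (Fintype.card T : ℝ≥0∞) *
            (ENNReal.ofReal ((2:ℝ)^(-(N:ℝ))) * ENNReal.ofReal (ψ p)) := by
          rw [add_assoc, add_comm]
          refine add_le_add_left ?_ _
          rw [← add_mul, ← ENNReal.ofReal_add (by positivity) (by positivity)]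
          refine mul_le_mul_left (ENNReal.ofReal_le_ofReal ?_) _
          have h4 : C₀ ≤ C₀ / (1 - r) := by
            rw [le_div_iff₀ h1r]; nlinarith
          have h5 : 2*C₀/(1-r) + C₀/(1-r) = 3*C₀/(1-r) := by ring
          linarith
  -- let N → ∞
  apply ENNReal.le_of_forall_pos_le_add
  intro ε hε _
  have hcT1 : (1:ℝ) ≤ (Fintype.card T : ℝ) := by exact_mod_cast Fintype.card_pos
  have hD : (0:ℝ) < (Fintype.card T : ℝ) * ψ p := by positivity
  have hd0 : (0:ℝ) < (ε:ℝ) / ((Fintype.card T : ℝ) * ψ p) := by positivity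
  obtain ⟨N, hN⟩ := exists_pow_lt_of_lt_one hd0 (by norm_num : (1/2:ℝ) < 1)
  have h2N : (2:ℝ) ^ (-(N:ℝ)) = (1/2:ℝ)^N := by
    rw [Real.rpow_neg (by norm_num : (0:ℝ) ≤ 2), Real.rpow_natCast, one_div, inv_pow]
  have htail : (Fintype.card T : ℝ≥0∞) *
      (ENNReal.ofReal ((2:ℝ)^(-(N:ℝ))) * ENNReal.ofReal (ψ p)) ≤ (ε : ℝ≥0∞) := by
    rw [← ENNReal.ofReal_natCast, ← ENNReal.ofReal_mul (by positivity),
      ← ENNReal.ofReal_mul (by positivity), ← ENNReal.ofReal_coe_nnreal]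
    refine ENNReal.ofReal_le_ofReal ?_
    rw [h2N]
    have h6 : (1/2:ℝ)^N * ((Fintype.card T : ℝ) * ψ p) < (ε:ℝ) := (lt_div_iff₀ hD).1 hN
    nlinarith [h6]
  exact le_trans (main N) (add_le_add_right htail _)
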